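/- With L and ρ as above, det(∂²L/∂yⁱ∂yʲ) = (Σᵢ((xⁱ)² − (yⁱ)²)) / (Σᵢ((xⁱ)² + (yⁱ)²))^{n+1}. -/

import Mathlib

open ContinuousLinearMap in
noncomputable def pr1 (n : ℕ) (i : Fin n) : ((Fin n → ℝ) × (Fin n → ℝ)) →L[ℝ] ℝ :=
  (proj i).comp (fst ℝ (Fin n → ℝ) (Fin n → ℝ))

open ContinuousLinearMap in
noncomputable def pr2 (n : ℕ) (i : Fin n) : ((Fin n → ℝ) × (Fin n → ℝ)) →L[ℝ] ℝ :=
  (proj i).comp (snd ℝ (Fin n → ℝ) (Fin n → ℝ))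

noncomputable def Dρ (n : ℕ) (q : (Fin n → ℝ) × (Fin n → ℝ)) :
    ((Fin n → ℝ) × (Fin n → ℝ)) →L[ℝ] ℝ :=
  ∑ i : Fin n, ((q.1 i • pr1 n i + q.1 i • pr1 n i) + (q.2 i • pr2 n i + q.2 i • pr2 n i))

lemma hDρ (n : ℕ) (ρ : ((Fin n → ℝ) × (Fin n → ℝ)) → ℝ)
    (hρ : ∀ p, ρ p = ∑ i : Fin n, ((p.1 i) ^ 2 + (p.2 i) ^ 2)) (q) :
    HasFDerivAt ρ (Dρ n q) q := by
  have : ρ = fun p => ∑ i : Fin n, ((p.1 i * p.1 i) + (p.2 i * p.2 i)) := by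
    funext p; rw [hρ]; exact Finset.sum_congr rfl fun i _ => by ring
  rw [this, Dρ]
  exact HasFDerivAt.fun_sum fun i _ =>
    (((pr1 n i).hasFDerivAt.mul (pr1 n i).hasFDerivAt).add
      ((pr2 n i).hasFDerivAt.mul (pr2 n i).hasFDerivAt))

lemma Dρ_apply (n : ℕ) (q : (Fin n → ℝ) × (Fin n → ℝ)) (j : Fin n) :
    Dρ n q ((0 : Fin n → ℝ), Pi.single j (1 : ℝ)) = 2 * q.2 j := by
  simp only [Dρ, pr1, pr2, ContinuousLinearMap.sum_apply, ContinuousLinearMap.add_apply,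
    ContinuousLinearMap.smul_apply, ContinuousLinearMap.comp_apply,
    ContinuousLinearMap.coe_fst', ContinuousLinearMap.coe_snd', ContinuousLinearMap.proj_apply,
    Pi.zero_apply, Pi.single_apply, smul_eq_mul, mul_zero, mul_ite, mul_one, add_zero, zero_add]
  rw [Finset.sum_congr rfl (fun i _ => (two_mul _).symm)]
  rw [← Finset.mul_sum, Finset.sum_ite_eq' Finset.univ j q.2, if_pos (Finset.mem_univ j)]

lemma fderivL (n : ℕ) (L ρ : ((Fin n → ℝ) × (Fin n → ℝ)) → ℝ)
    (hρ : ∀ p, ρ p = ∑ i : Fin n, ((p.1 i) ^ 2 + (p.2 i) ^ 2))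
    (hL : ∀ p, L p = (1 / 2) * Real.log (ρ p))
    (q) (hq : 0 < ρ q) (j : Fin n) :
    fderiv ℝ L q ((0 : Fin n → ℝ), Pi.single j (1 : ℝ)) = q.2 j / ρ q := by
  have hLfun : L = fun p => (1 / 2) * Real.log (ρ p) := funext hL
  have h : HasFDerivAt L ((1 / 2 : ℝ) • ((ρ q)⁻¹ • Dρ n q)) q := by
    rw [hLfun]
    exact ((hDρ n ρ hρ q).log hq.ne').const_mul _
  rw [h.fderiv]
  simp only [ContinuousLinearMap.smul_apply, smul_eq_mul, Dρ_apply]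
  field_simp

theorem stmt6 (n : ℕ)
    (L ρ : ((Fin n → ℝ) × (Fin n → ℝ)) → ℝ)
    (hρ : ∀ p, ρ p = ∑ i : Fin n, ((p.1 i) ^ 2 + (p.2 i) ^ 2))
    (hL : ∀ p, L p = (1 / 2) * Real.log (ρ p)) :
    ∀ p, 0 < ρ p →
      (Matrix.of fun i j : Fin n =>
          fderiv ℝ (fun q => fderiv ℝ L q ((0 : Fin n → ℝ), Pi.single j (1 : ℝ))) p
            ((0 : Fin n → ℝ), Pi.single i (1 : ℝ))).det =
        (∑ i : Fin n, ((p.1 i) ^ 2 - (p.2 i) ^ 2)) / (ρ p) ^ (n + 1) := by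
  intro p hp
  have hρcont : Continuous ρ := by
    have : Differentiable ℝ ρ := fun q => (hDρ n ρ hρ q).differentiableAt
    exact this.continuous
  have hopen : IsOpen {q : (Fin n → ℝ) × (Fin n → ℝ) | 0 < ρ q} :=
    isOpen_lt continuous_const hρcont
  set r := ρ p with hr
  have hrne : r ≠ 0 := hp.ne'
  -- second derivative entries
  have key : ∀ i j : Fin n,
      fderiv ℝ (fun q => fderiv ℝ L q ((0 : Fin n → ℝ), Pi.single j (1 : ℝ))) p
        ((0 : Fin n → ℝ), Pi.single i (1 : ℝ)) =
      ((if i = j then 1 else 0) - 2 * p.2 i * p.2 j / r) / r := by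
    intro i j
    have hev : (fun q => fderiv ℝ L q ((0 : Fin n → ℝ), Pi.single j (1 : ℝ)))
        =ᶠ[nhds p] (fun q => q.2 j * (ρ q)⁻¹) := by
      filter_upwards [hopen.mem_nhds hp] with q hq
      rw [fderivL n L ρ hρ hL q hq j, div_eq_mul_inv]
    rw [hev.fderiv_eq]
    have hinv : HasFDerivAt (fun q => (ρ q)⁻¹)
        ((ContinuousLinearMap.smulRight (1 : ℝ →L[ℝ] ℝ) (-(r ^ 2)⁻¹)).comp (Dρ n p)) p :=
      (hasFDerivAt_inv hrne).comp p (hDρ n ρ hρ p)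
    have hm : HasFDerivAt (fun q : (Fin n → ℝ) × (Fin n → ℝ) => q.2 j * (ρ q)⁻¹)
        ((pr2 n j) p • (ContinuousLinearMap.smulRight (1 : ℝ →L[ℝ] ℝ) (-(r ^ 2)⁻¹)).comp (Dρ n p)
          + (ρ p)⁻¹ • pr2 n j) p := (pr2 n j).hasFDerivAt.mul hinv
    rw [hm.fderiv]
    simp only [ContinuousLinearMap.add_apply, ContinuousLinearMap.smul_apply,
      ContinuousLinearMap.comp_apply, ContinuousLinearMap.smulRight_apply,
      ContinuousLinearMap.one_apply, Dρ_apply, smul_eq_mul, pr2,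
      ContinuousLinearMap.coe_snd', ContinuousLinearMap.proj_apply, Function.comp_apply,
      Pi.single_apply]
    rw [← hr]
    field_simp
    by_cases h : i = j <;> simp [h, eq_comm] <;> ring
  -- rewrite the matrix
  have hM : (Matrix.of fun i j : Fin n =>
        fderiv ℝ (fun q => fderiv ℝ L q ((0 : Fin n → ℝ), Pi.single j (1 : ℝ))) p
          ((0 : Fin n → ℝ), Pi.single i (1 : ℝ))) =
      r⁻¹ • (1 + Matrix.replicateCol Unit (fun i => p.2 i) *
        Matrix.replicateRow Unit (fun j => -2 * p.2 j / r)) := by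
    ext i j
    rw [Matrix.of_apply, key i j]
    simp only [Matrix.smul_apply, Matrix.add_apply, Matrix.one_apply, Matrix.mul_apply,
      Matrix.replicateCol_apply, Matrix.replicateRow_apply, Finset.univ_unique, Finset.sum_singleton,
      smul_eq_mul]
    field_simp
    by_cases h : i = j <;> simp [h] <;> ring
  rw [hM, Matrix.det_smul, Matrix.det_one_add_replicateCol_mul_replicateRow]
  have hsum : (∑ i : Fin n, ((p.1 i) ^ 2 - (p.2 i) ^ 2)) =
      r - 2 * ∑ i : Fin n, (p.2 i) ^ 2 := by
    rw [hr, hρ, Finset.mul_sum, ← Finset.sum_sub_distrib]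
    exact Finset.sum_congr rfl fun i _ => by ring
  have hdot : dotProduct (fun j => -2 * p.2 j / r) (fun i => p.2 i) =
      -(2 * ∑ i : Fin n, (p.2 i) ^ 2) / r := by
    rw [dotProduct]
    rw [Finset.sum_congr rfl (fun i (_ : i ∈ Finset.univ) =>
      (by ring : -2 * p.2 i / r * p.2 i = -(2 * p.2 i ^ 2 / r)))]
    rw [Finset.sum_neg_distrib, ← Finset.sum_div, ← Finset.mul_sum, neg_div]
  rw [hdot, hsum]
  rw [Fintype.card_fin, inv_pow]
  field_simp
  ring
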